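/- Let (E, F) be a Finsler algebroid, h₀ its Barthel endomorphism (the unique homogeneous, conservative, torsion-free horizontal endomorphism). Then (E, F) is a Berwald Lie algebroid if and only if there exists a linear connection ∇ on E such that (∇_X Y)^V = [X^{h₀}, Y^V]_L for all X, Y ∈ Γ(E). -/

import Mathlib

/-!
We work with a Lie algebroid `π : E → M` in a (global) trivialization:
the base `M` is modelled on a real normed space `A`, the fibre of `E` is a real
normed space `B`, the total space is `E = A × B`, sections of `E` are maps
`A → B`, the anchor is `ρ : A → (B →L[ℝ] A)` and the structure function of the
bracket is `Lb : A → (B →L[ℝ] B →L[ℝ] B)`.  The prolongation `L^π E → E` is the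
trivial bundle with fibre `B × B`; its sections are pairs of maps `(A × B) → B`
(the components along the canonical frames `𝒳_α` and `𝒱_α`).
-/

noncomputable section

variable {A B : Type*} [NormedAddCommGroup A] [NormedSpace ℝ A]
  [NormedAddCommGroup B] [NormedSpace ℝ B]

/-- Sections of the prolongation `L^π E → E`. -/
abbrev Sec (A B : Type*) := ((A × B) → B) × ((A × B) → B)

/-- The axioms of a Lie algebroid (smoothness, antisymmetry and the two
structure equations: anchor compatibility and the Jacobi identity). -/
def IsLieAlgebroidData (ρ : A → B →L[ℝ] A) (Lb : A → B →L[ℝ] B →L[ℝ] B) : Prop :=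
  ContDiff ℝ (⊤ : ℕ∞) ρ ∧ ContDiff ℝ (⊤ : ℕ∞) Lb ∧
    (∀ x u v, Lb x u v = - Lb x v u) ∧
    (∀ x u v, fderiv ℝ ρ x (ρ x u) v - fderiv ℝ ρ x (ρ x v) u = ρ x (Lb x u v)) ∧
    (∀ x u v w,
      fderiv ℝ Lb x (ρ x u) v w + Lb x u (Lb x v w) +
        fderiv ℝ Lb x (ρ x v) w u + Lb x v (Lb x w u) +
          fderiv ℝ Lb x (ρ x w) u v + Lb x w (Lb x u v) = 0)

/-- The Lie algebroid bracket `[X, Y]_E` of two sections of `E`. -/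
def abr (ρ : A → B →L[ℝ] A) (Lb : A → B →L[ℝ] B →L[ℝ] B) (X Y : A → B) : A → B :=
  fun x => fderiv ℝ Y x (ρ x (X x)) - fderiv ℝ X x (ρ x (Y x)) + Lb x (X x) (Y x)

/-- The action `ρ(X)(f)` of a section through the anchor. -/
def ρf (ρ : A → B →L[ℝ] A) (X : A → B) (f : A → ℝ) : A → ℝ :=
  fun x => fderiv ℝ f x (ρ x (X x))

/-- Vertical lift `f^∨ = f ∘ π` of a function on `M`. -/
def fvert (f : A → ℝ) : A × B → ℝ := fun p => f p.1

/-- Complete lift `f^c(u) = ρ(u)(f)` of a function on `M`. -/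
def fcomp (ρ : A → B →L[ℝ] A) (f : A → ℝ) : A × B → ℝ :=
  fun p => fderiv ℝ f p.1 (ρ p.1 p.2)

/-- The tangent vector to `E` determined by a prolongation section through the
prolongation anchor `ρ_L(u, z) = z`. -/
def ρL (ρ : A → B →L[ℝ] A) (U : Sec A B) (p : A × B) : A × B :=
  (ρ p.1 (U.1 p), U.2 p)

/-- The bracket `[·,·]_L` of the prolongation Lie algebroid `L^π E`. -/
def pbr (ρ : A → B →L[ℝ] A) (Lb : A → B →L[ℝ] B →L[ℝ] B) (U V : Sec A B) : Sec A B :=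
  (fun p => fderiv ℝ V.1 p (ρL ρ U p) - fderiv ℝ U.1 p (ρL ρ V p) + Lb p.1 (U.1 p) (V.1 p),
   fun p => fderiv ℝ V.2 p (ρL ρ U p) - fderiv ℝ U.2 p (ρL ρ V p))

/-- The vertical endomorphism `J = i ∘ j` of `L^π E`. -/
def vJ (U : Sec A B) : Sec A B := (0, U.1)

/-- The Liouville (Euler) section `C = i ∘ δ`. -/
def Liou : Sec A B := (0, fun p => p.2)

/-- Vertical lift `X^V` of a section of `E` to `L^π E`. -/
def vlift (X : A → B) : Sec A B := (0, fun p => X p.1)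

/-- Complete lift `X^C` of a section of `E` to `L^π E`. -/
def clift (ρ : A → B →L[ℝ] A) (Lb : A → B →L[ℝ] B →L[ℝ] B) (X : A → B) : Sec A B :=
  (fun p => X p.1, fun p => fderiv ℝ X p.1 (ρ p.1 p.2) - Lb p.1 (X p.1) p.2)

/-- The horizontal endomorphism with coefficient `𝓑`
(`h = (𝒳_β + 𝓑^α_β 𝒱_α) ⊗ 𝒳^β`). -/
def hor (𝓑 : A × B → B →L[ℝ] B) (U : Sec A B) : Sec A B :=
  (U.1, fun p => 𝓑 p (U.1 p))

/-- The vertical projector `v = Id − h` associated to a horizontal endomorphism. -/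
def vpr (𝓑 : A × B → B →L[ℝ] B) (U : Sec A B) : Sec A B := U - hor 𝓑 U

/-- Horizontal lift `X^h = h(X^C)`. -/
def hlift (ρ : A → B →L[ℝ] A) (Lb : A → B →L[ℝ] B →L[ℝ] B)
    (𝓑 : A × B → B →L[ℝ] B) (X : A → B) : Sec A B :=
  hor 𝓑 (clift ρ Lb X)

/-- Multiplication of a prolongation section by a function on `E`. -/
def fsmul (g : A × B → ℝ) (U : Sec A B) : Sec A B :=
  (fun p => g p • U.1 p, fun p => g p • U.2 p)

/-- Generalized Frölicher–Nijenhuis bracket `[K, Z]^{F-N}` of a `(1,1)`-tensor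
with a section: `[K, Z]^{F-N}(U) = [K(U), Z]_L − K([U, Z]_L)`. -/
def fnKZ (ρ : A → B →L[ℝ] A) (Lb : A → B →L[ℝ] B →L[ℝ] B)
    (K : Sec A B → Sec A B) (Z U : Sec A B) : Sec A B :=
  pbr ρ Lb (K U) Z - K (pbr ρ Lb U Z)

/-- Generalized Frölicher–Nijenhuis bracket `[Z, K]^{F-N}` of a section with a
`(1,1)`-tensor. -/
def fnZK (ρ : A → B →L[ℝ] A) (Lb : A → B →L[ℝ] B →L[ℝ] B)
    (Z : Sec A B) (K : Sec A B → Sec A B) (U : Sec A B) : Sec A B :=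
  pbr ρ Lb Z (K U) - K (pbr ρ Lb Z U)

/-- Generalized Frölicher–Nijenhuis bracket of two `(1,1)`-tensors, evaluated on
two sections. -/
def fnKL (ρ : A → B →L[ℝ] A) (Lb : A → B →L[ℝ] B →L[ℝ] B)
    (K L' : Sec A B → Sec A B) (U V : Sec A B) : Sec A B :=
  pbr ρ Lb (K U) (L' V) + pbr ρ Lb (L' U) (K V)
    + K (L' (pbr ρ Lb U V)) + L' (K (pbr ρ Lb U V))
    - K (pbr ρ Lb U (L' V)) - K (pbr ρ Lb (L' U) V)
    - L' (pbr ρ Lb U (K V)) - L' (pbr ρ Lb (K U) V)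

/-- The slit total space `E ∖ {0}` (complement of the zero section). -/
def Slit : Set (A × B) := {p | p.2 ≠ 0}

/-- Smoothness of a prolongation section (on all of `E`). -/
def SecSmooth (U : Sec A B) : Prop :=
  ContDiff ℝ (⊤ : ℕ∞) U.1 ∧ ContDiff ℝ (⊤ : ℕ∞) U.2

/-- Smoothness of a prolongation section away from the zero section. -/
def SecSmoothOn (U : Sec A B) : Prop :=
  ContDiffOn ℝ (⊤ : ℕ∞) U.1 (Slit (A := A) (B := B)) ∧
    ContDiffOn ℝ (⊤ : ℕ∞) U.2 (Slit (A := A) (B := B))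

/-- Equality of prolongation sections away from the zero section. -/
def OnSlit (U V : Sec A B) : Prop :=
  ∀ p : A × B, p.2 ≠ 0 → U.1 p = V.1 p ∧ U.2 p = V.2 p

/-- The semispray associated to the horizontal endomorphism `𝓑` (i.e. `h(S)` for
any semispray `S`). -/
def Sassoc (𝓑 : A × B → B →L[ℝ] B) : Sec A B :=
  (fun p => p.2, fun p => 𝓑 p p.2)

/-- The Nijenhuis tensor `N_h` of the horizontal endomorphism `𝓑`. -/
def NijH (ρ : A → B →L[ℝ] A) (Lb : A → B →L[ℝ] B →L[ℝ] B)
    (𝓑 : A × B → B →L[ℝ] B) (U V : Sec A B) : Sec A B :=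
  pbr ρ Lb (hor 𝓑 U) (hor 𝓑 V) - hor 𝓑 (pbr ρ Lb (hor 𝓑 U) V)
    - hor 𝓑 (pbr ρ Lb U (hor 𝓑 V)) + hor 𝓑 (pbr ρ Lb U V)

/-- The curvature `Ω = −N_h` of a horizontal endomorphism. -/
def CurvH (ρ : A → B →L[ℝ] A) (Lb : A → B →L[ℝ] B →L[ℝ] B)
    (𝓑 : A × B → B →L[ℝ] B) (U V : Sec A B) : Sec A B :=
  - NijH ρ Lb 𝓑 U V

/-- The strong torsion `T = i_S t + H` of a horizontal endomorphism, where
`t = [J, h]^{F-N}` is the weak torsion and `H = [h, C]^{F-N}` the tension. -/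
def StrongTor (ρ : A → B →L[ℝ] A) (Lb : A → B →L[ℝ] B →L[ℝ] B)
    (𝓑 : A × B → B →L[ℝ] B) (U : Sec A B) : Sec A B :=
  fnKL ρ Lb vJ (hor 𝓑) (Sassoc 𝓑) U + fnKZ ρ Lb (hor 𝓑) Liou U

/-- The almost complex structure `F = h ∘ [S, h]^{F-N} − J` induced by a
horizontal endomorphism with associated semispray `S`. -/
def bigF (ρ : A → B →L[ℝ] A) (Lb : A → B →L[ℝ] B →L[ℝ] B)
    (𝓑 : A × B → B →L[ℝ] B) (U : Sec A B) : Sec A B :=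
  hor 𝓑 (fnZK ρ Lb (Sassoc 𝓑) (hor 𝓑) U) - vJ U

/-- Homogeneity of a horizontal endomorphism: its tension `H = [h, C]^{F-N}`
vanishes. -/
def HomogeneousH (ρ : A → B →L[ℝ] A) (Lb : A → B →L[ℝ] B →L[ℝ] B)
    (𝓑 : A × B → B →L[ℝ] B) : Prop :=
  ∀ U : Sec A B, SecSmoothOn U → OnSlit (fnKZ ρ Lb (hor 𝓑) Liou U) 0

/-- Torsion-freeness of a horizontal endomorphism: its weak torsion
`t = [J, h]^{F-N}` vanishes. -/
def TorsionFreeH (ρ : A → B →L[ℝ] A) (Lb : A → B →L[ℝ] B →L[ℝ] B)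
    (𝓑 : A × B → B →L[ℝ] B) : Prop :=
  ∀ U V : Sec A B, SecSmoothOn U → SecSmoothOn V →
    OnSlit (fnKL ρ Lb vJ (hor 𝓑) U V) 0

/-- The one-form `d^L_J F = i_J d^L F` of a Finsler function. -/
def θF (Fl : A × B → ℝ) (U : Sec A B) : A × B → ℝ :=
  fun p => fderiv ℝ Fl p ((0 : A), U.1 p)

/-- The fundamental two-form `ω = d^L d^L_J F` of a Finsler function. -/
def ωF (ρ : A → B →L[ℝ] A) (Lb : A → B →L[ℝ] B →L[ℝ] B)
    (Fl : A × B → ℝ) (U V : Sec A B) : A × B → ℝ :=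
  fun p => fderiv ℝ (θF Fl V) p (ρL ρ U p) - fderiv ℝ (θF Fl U) p (ρL ρ V p)
    - θF Fl (pbr ρ Lb U V) p

/-- The axioms of a Finsler algebroid: the fundamental function is smooth away
from the zero section, positive there, homogeneous of degree `2`
(`ρ_L(C)(F) = 2F`), and its fundamental form `ω = d^L d^L_J F` is
nondegenerate. -/
def IsFinslerData (ρ : A → B →L[ℝ] A) (Lb : A → B →L[ℝ] B →L[ℝ] B)
    (Fl : A × B → ℝ) : Prop :=
  ContDiffOn ℝ (⊤ : ℕ∞) Fl (Slit (A := A) (B := B)) ∧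
    (∀ p : A × B, p.2 ≠ 0 → 0 < Fl p) ∧
    (∀ p : A × B, p.2 ≠ 0 → fderiv ℝ Fl p ((0 : A), p.2) = 2 * Fl p) ∧
    (∀ W : Sec A B, SecSmoothOn W →
      (∀ U : Sec A B, SecSmoothOn U → ∀ p : A × B, p.2 ≠ 0 → ωF ρ Lb Fl W U p = 0) →
      ∀ p : A × B, p.2 ≠ 0 → W.1 p = 0 ∧ W.2 p = 0)

/-- Conservativity of a horizontal endomorphism: `d^L_h F = 0`. -/
def Conservative (ρ : A → B →L[ℝ] A) (Fl : A × B → ℝ)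
    (𝓑 : A × B → B →L[ℝ] B) : Prop :=
  ∀ p : A × B, p.2 ≠ 0 → ∀ z : B, fderiv ℝ Fl p (ρ p.1 z, 𝓑 p z) = 0

/-- The vertical metric `G(J X̃, J Ỹ) = ω(J X̃, Ỹ)`, evaluated on two vertical
sections. -/
def Gmet (ρ : A → B →L[ℝ] A) (Lb : A → B →L[ℝ] B →L[ℝ] B)
    (Fl : A × B → ℝ) (W₁ W₂ : Sec A B) : A × B → ℝ :=
  ωF ρ Lb Fl ((0 : (A × B) → B), W₁.2) (W₂.2, (0 : (A × B) → B))

/-- The prolongation `G̃(X̃, Ỹ) = G(J X̃, J Ỹ) + G(v X̃, v Ỹ)` of the vertical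
metric along the horizontal endomorphism `𝓑`. -/
def Gtil (ρ : A → B →L[ℝ] A) (Lb : A → B →L[ℝ] B →L[ℝ] B)
    (Fl : A × B → ℝ) (𝓑 : A × B → B →L[ℝ] B) (U V : Sec A B) : A × B → ℝ :=
  fun p => Gmet ρ Lb Fl (vJ U) (vJ V) p + Gmet ρ Lb Fl (vpr 𝓑 U) (vpr 𝓑 V) p

/-- The linear connection on `E` with Christoffel coefficient `Γ`:
`∇_X Y = ρ(X)(Y) + Γ(X, Y)`. -/
def covD (ρ : A → B →L[ℝ] A) (Γ : A → B →L[ℝ] B →L[ℝ] B) (X Y : A → B) : A → B :=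
  fun x => fderiv ℝ Y x (ρ x (X x)) + Γ x (X x) (Y x)

/-- The coefficient of the horizontal endomorphism `h_∇` generated by the linear
connection `Γ` (`𝓑^β_α = −y^γ Γ^β_{αγ}`). -/
def horOf (Γ : A → B →L[ℝ] B →L[ℝ] B) : A × B → B →L[ℝ] B :=
  fun p => -((Γ p.1).flip p.2)

set_option linter.unusedSectionVars false
section Helpers

variable {A B : Type*} [NormedAddCommGroup A] [NormedSpace ℝ A]
  [NormedAddCommGroup B] [NormedSpace ℝ B]

private lemma one_le_inf : (1 : WithTop ℕ∞) ≤ ((⊤ : ℕ∞) : WithTop ℕ∞) := by norm_cast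

private lemma two_le_inf : (2 : WithTop ℕ∞) ≤ ((⊤ : ℕ∞) : WithTop ℕ∞) := by norm_cast

private lemma slit_open : IsOpen (Slit (A := A) (B := B)) := by
  have : Slit (A := A) (B := B) = Prod.snd ⁻¹' ({0}ᶜ : Set B) := rfl
  rw [this]; exact isOpen_compl_singleton.preimage continuous_snd

private lemma fderiv_zero_fun (p : A × B) :
    fderiv ℝ (0 : (A × B) → B) p = 0 := by
  rw [show (0 : (A × B) → B) = fun _ => (0 : B) from rfl]
  exact fderiv_const_apply 0

private lemma diffAt_of_contDiffOn {C : Type*} [NormedAddCommGroup C] [NormedSpace ℝ C]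
    {f : A × B → C} (hf : ContDiffOn ℝ (⊤ : ℕ∞) f (Slit (A := A) (B := B)))
    {p : A × B} (hp : p.2 ≠ 0) : DifferentiableAt ℝ f p :=
  (hf.contDiffAt (slit_open.mem_nhds hp)).differentiableAt (lt_of_lt_of_le zero_lt_one one_le_inf).ne'

private lemma fderiv_apply_const {F G : Type*} [NormedAddCommGroup F] [NormedSpace ℝ F]
    [NormedAddCommGroup G] [NormedSpace ℝ G]
    {c : A × B → (F →L[ℝ] G)} {p : A × B}
    (hc : DifferentiableAt ℝ c p) (u : F) (w : A × B) :
    fderiv ℝ (fun q => c q u) p w = (fderiv ℝ c p w) u := by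
  rw [fderiv_clm_apply hc (differentiableAt_const u)]
  simp

private lemma fderiv_clm_apply' {F G : Type*} [NormedAddCommGroup F] [NormedSpace ℝ F]
    [NormedAddCommGroup G] [NormedSpace ℝ G]
    {c : A × B → (F →L[ℝ] G)} {m : A × B → F} {p : A × B}
    (hc : DifferentiableAt ℝ c p) (hm : DifferentiableAt ℝ m p) (w : A × B) :
    fderiv ℝ (fun q => c q (m q)) p w = c p (fderiv ℝ m p w) + (fderiv ℝ c p w) (m p) := by
  rw [fderiv_clm_apply hc hm]
  simp

private lemma fderiv_fst_comp {C : Type*} [NormedAddCommGroup C] [NormedSpace ℝ C]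
    {X : A → C} {p : A × B} (hX : DifferentiableAt ℝ X p.1) (w : A × B) :
    fderiv ℝ (fun q : A × B => X q.1) p w = fderiv ℝ X p.1 w.1 := by
  have h : HasFDerivAt (fun q : A × B => X q.1)
      ((fderiv ℝ X p.1).comp (ContinuousLinearMap.fst ℝ A B)) p :=
    hX.hasFDerivAt.comp p hasFDerivAt_fst
  rw [h.fderiv]; rfl

private lemma fderiv_snd_comp (p : A × B) (w : A × B) :
    fderiv ℝ (fun q : A × B => q.2) p w = w.2 := by
  rw [show (fun q : A × B => q.2) = Prod.snd from rfl, fderiv_snd]; rfl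

private lemma fderiv_pair_zero {f : A × B → B} {p : A × B}
    (hf : DifferentiableAt ℝ f p) (w : A × B) :
    fderiv ℝ (fun q => (((0 : A), f q) : A × B)) p w = ((0 : A), fderiv ℝ f p w) := by
  have h : HasFDerivAt (fun q : A × B => (((0 : A), f q) : A × B))
      ((0 : (A × B) →L[ℝ] A).prod (fderiv ℝ f p)) p :=
    (hasFDerivAt_const (0 : A) p).prodMk hf.hasFDerivAt
  rw [h.fderiv]; rfl

private lemma fderiv_pair {f : A × B → A} {g : A × B → B} {p : A × B}
    (hf : DifferentiableAt ℝ f p) (hg : DifferentiableAt ℝ g p) (w : A × B) :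
    fderiv ℝ (fun q => ((f q, g q) : A × B)) p w = (fderiv ℝ f p w, fderiv ℝ g p w) := by
  have h := (hf.hasFDerivAt.prodMk hg.hasFDerivAt).fderiv
  rw [h]; rfl

end Helpers
set_option linter.unusedSectionVars false

section BH
variable {A B : Type*} [NormedAddCommGroup A] [NormedSpace ℝ A]
  [NormedAddCommGroup B] [NormedSpace ℝ B]

private lemma barthel_H {ρ : A → B →L[ℝ] A} {Lb : A → B →L[ℝ] B →L[ℝ] B}
    {𝓑₀ : A × B → B →L[ℝ] B}
    (h₀hom : HomogeneousH ρ Lb 𝓑₀) {p : A × B} (hp : p.2 ≠ 0) (u : B) :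
    fderiv ℝ (fun q => 𝓑₀ q u) p ((0 : A), p.2) = 𝓑₀ p u := by
  have hU : SecSmoothOn ((fun _ => u, fun _ => (0 : B)) : Sec A B) :=
    ⟨contDiffOn_const, contDiffOn_const⟩
  have h := (h₀hom _ hU p hp).2
  simp only [fnKZ, pbr, hor, Liou, vJ, ρL, Prod.snd_sub, Prod.snd_zero, Pi.sub_apply,
    Pi.zero_apply, map_zero, fderiv_zero_fun, ContinuousLinearMap.zero_apply,
    fderiv_const_apply, fderiv_snd_comp, sub_zero, zero_sub, zero_add, add_zero,
    neg_zero] at h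
  rw [sub_eq_zero] at h
  exact h.symm

private lemma barthel_T {ρ : A → B →L[ℝ] A} {Lb : A → B →L[ℝ] B →L[ℝ] B}
    {𝓑₀ : A × B → B →L[ℝ] B}
    (h₀tf : TorsionFreeH ρ Lb 𝓑₀) {p : A × B} (hp : p.2 ≠ 0) (u v : B) :
    fderiv ℝ (fun q => 𝓑₀ q v) p ((0 : A), u)
      - fderiv ℝ (fun q => 𝓑₀ q u) p ((0 : A), v) = Lb p.1 u v := by
  have hU : SecSmoothOn ((fun _ => u, fun _ => (0 : B)) : Sec A B) :=
    ⟨contDiffOn_const, contDiffOn_const⟩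
  have hV : SecSmoothOn ((fun _ => v, fun _ => (0 : B)) : Sec A B) :=
    ⟨contDiffOn_const, contDiffOn_const⟩
  have h := (h₀tf _ _ hU hV p hp).2
  simp only [fnKL, pbr, hor, Liou, vJ, ρL, Prod.snd_sub, Prod.snd_add, Prod.snd_zero,
    Pi.sub_apply, Pi.add_apply, Pi.zero_apply, map_zero, fderiv_zero_fun,
    ContinuousLinearMap.zero_apply, fderiv_const_apply, fderiv_snd_comp, sub_zero,
    zero_sub, zero_add, add_zero, neg_zero, add_sub_cancel_right] at h
  rw [sub_eq_zero] at h
  rw [sub_eq_add_neg]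
  exact h

end BH
section CH2
variable {A B : Type*} [NormedAddCommGroup A] [NormedSpace ℝ A]
  [NormedAddCommGroup B] [NormedSpace ℝ B]

private lemma fderiv_horOf {Γ : A → B →L[ℝ] B →L[ℝ] B} (hΓ : ContDiff ℝ (⊤ : ℕ∞) Γ)
    (p : A × B) (u b : B) :
    fderiv ℝ (fun q : A × B => horOf Γ q u) p ((0 : A), b) = -(Γ p.1 u b) := by
  have hXd : DifferentiableAt ℝ (fun x : A => Γ x u) p.1 :=
    ((hΓ.clm_apply contDiff_const).differentiable (lt_of_lt_of_le zero_lt_one one_le_inf).ne').differentiableAt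
  have hcd : DifferentiableAt ℝ (fun q : A × B => Γ q.1 u) p :=
    hXd.comp p differentiableAt_fst
  have hfun : (fun q : A × B => horOf Γ q u) = fun q : A × B => -(Γ q.1 u q.2) := by
    funext q; simp [horOf]
  rw [hfun, fderiv_fun_neg]
  simp only [ContinuousLinearMap.neg_apply]
  have h := fderiv_clm_apply' (c := fun q : A × B => Γ q.1 u) (m := fun q : A × B => q.2)
    hcd differentiableAt_snd ((0 : A), b)
  rw [h, fderiv_snd_comp, fderiv_fst_comp hXd]
  simp

private lemma cons_snd_deriv {ρ : A → B →L[ℝ] A} {Fl : A × B → ℝ}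
    (hρ : ContDiff ℝ (⊤ : ℕ∞) ρ)
    (hFs : ContDiffOn ℝ (⊤ : ℕ∞) Fl (Slit (A := A) (B := B)))
    {𝓑 : A × B → B →L[ℝ] B} {p : A × B} (hp : p.2 ≠ 0)
    (h𝓑z : ∀ z : B, DifferentiableAt ℝ (fun q : A × B => 𝓑 q z) p)
    (hc : Conservative ρ Fl 𝓑) (z u : B) :
    fderiv ℝ (fderiv ℝ Fl) p ((0 : A), u) (ρ p.1 z, 𝓑 p z)
      = - fderiv ℝ Fl p ((0 : A), fderiv ℝ (fun q : A × B => 𝓑 q z) p ((0 : A), u)) := by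
  have hF2 : DifferentiableAt ℝ (fderiv ℝ Fl) p :=
    ((hFs.contDiffAt (slit_open.mem_nhds hp)).fderiv_right (m := 1)
      (by norm_cast)).differentiableAt one_ne_zero
  have hρz : DifferentiableAt ℝ (fun q : A × B => ρ q.1 z) p :=
    (((hρ.clm_apply contDiff_const).differentiable (lt_of_lt_of_le zero_lt_one one_le_inf).ne').differentiableAt).comp p
      differentiableAt_fst
  have hmd : DifferentiableAt ℝ (fun q : A × B => ((ρ q.1 z, 𝓑 q z) : A × B)) p :=
    DifferentiableAt.prodMk hρz (h𝓑z z)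
  have hzero : fderiv ℝ (fun q : A × B => fderiv ℝ Fl q ((ρ q.1 z, 𝓑 q z) : A × B)) p
      ((0 : A), u) = 0 := by
    have hev : (fun q : A × B => fderiv ℝ Fl q ((ρ q.1 z, 𝓑 q z) : A × B))
        =ᶠ[nhds p] (fun _ => (0 : ℝ)) :=
      Filter.eventuallyEq_of_mem (slit_open.mem_nhds hp) (fun q hq => hc q hq z)
    rw [hev.fderiv_eq, fderiv_const_apply]
    rfl
  have hexp := fderiv_clm_apply' (c := fderiv ℝ Fl)
    (m := fun q : A × B => ((ρ q.1 z, 𝓑 q z) : A × B)) hF2 hmd ((0 : A), u)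
  rw [hzero] at hexp
  rw [fderiv_pair hρz (h𝓑z z), fderiv_fst_comp
    (((hρ.clm_apply contDiff_const).differentiable (lt_of_lt_of_le zero_lt_one one_le_inf).ne').differentiableAt)] at hexp
  simp only [map_zero] at hexp
  have := hexp.symm
  linarith [this]

end CH2
section CH3
variable {A B : Type*} [NormedAddCommGroup A] [NormedSpace ℝ A]
  [NormedAddCommGroup B] [NormedSpace ℝ B]

private lemma key_g {ρ : A → B →L[ℝ] A} {Lb : A → B →L[ℝ] B →L[ℝ] B} {Fl : A × B → ℝ}
    (hρ : ContDiff ℝ (⊤ : ℕ∞) ρ)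
    (hFs : ContDiffOn ℝ (⊤ : ℕ∞) Fl (Slit (A := A) (B := B)))
    {𝓑 : A × B → B →L[ℝ] B} {p : A × B} (hp : p.2 ≠ 0)
    (h𝓑z : ∀ z : B, DifferentiableAt ℝ (fun q : A × B => 𝓑 q z) p)
    (hc : Conservative ρ Fl 𝓑)
    (hT : ∀ u v : B, fderiv ℝ (fun q : A × B => 𝓑 q v) p ((0 : A), u)
      - fderiv ℝ (fun q : A × B => 𝓑 q u) p ((0 : A), v) = Lb p.1 u v)
    (hH : ∀ u : B, fderiv ℝ (fun q : A × B => 𝓑 q u) p ((0 : A), p.2) = 𝓑 p u)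
    (u : B) :
    fderiv ℝ (fderiv ℝ Fl) p ((0 : A), u) (ρ p.1 p.2, 𝓑 p p.2)
      = fderiv ℝ Fl p (ρ p.1 u, 0) - fderiv ℝ Fl p ((0 : A), Lb p.1 u p.2) := by
  have h1 := cons_snd_deriv hρ hFs hp h𝓑z hc p.2 u
  have h2 : fderiv ℝ (fun q : A × B => 𝓑 q p.2) p ((0 : A), u) = Lb p.1 u p.2 + 𝓑 p u := by
    have h := hT u p.2
    rw [hH u] at h
    rw [sub_eq_iff_eq_add] at h
    exact h
  have h3 : fderiv ℝ Fl p ((0 : A), 𝓑 p u) = - fderiv ℝ Fl p (ρ p.1 u, 0) := by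
    have hcu := hc p hp u
    have he : ((ρ p.1 u, 𝓑 p u) : A × B) = (ρ p.1 u, (0 : B)) + ((0 : A), 𝓑 p u) := by simp
    rw [he, map_add] at hcu
    linarith
  rw [h1, h2]
  have he : (((0 : A), Lb p.1 u p.2 + 𝓑 p u) : A × B)
      = ((0 : A), Lb p.1 u p.2) + ((0 : A), 𝓑 p u) := by simp
  rw [he, map_add, h3]
  ring

private lemma omega_vert {ρ : A → B →L[ℝ] A} {Lb : A → B →L[ℝ] B →L[ℝ] B} {Fl : A × B → ℝ}
    (hFs : ContDiffOn ℝ (⊤ : ℕ∞) Fl (Slit (A := A) (B := B)))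
    {w : A × B → B} {p : A × B} (hp : p.2 ≠ 0)
    (hw : DifferentiableAt ℝ w p) (U : Sec A B) (hU : SecSmoothOn U) :
    ωF ρ Lb Fl ((0 : (A × B) → B), w) U p
      = fderiv ℝ (fderiv ℝ Fl) p ((0 : A), w p) ((0 : A), U.1 p) := by
  have hU1 : DifferentiableAt ℝ U.1 p := diffAt_of_contDiffOn hU.1 hp
  have hF2 : DifferentiableAt ℝ (fderiv ℝ Fl) p :=
    ((hFs.contDiffAt (slit_open.mem_nhds hp)).fderiv_right (m := 1)
      (by norm_cast)).differentiableAt one_ne_zero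
  have hm : DifferentiableAt ℝ (fun q : A × B => (((0 : A), U.1 q) : A × B)) p :=
    DifferentiableAt.prodMk (differentiableAt_const _) hU1
  have hexp := fderiv_clm_apply' (c := fderiv ℝ Fl)
    (m := fun q : A × B => (((0 : A), U.1 q) : A × B)) hF2 hm ((0 : A), w p)
  simp only [ωF, θF, pbr, ρL, Pi.zero_apply, map_zero, fderiv_zero_fun,
    ContinuousLinearMap.zero_apply, Prod.mk_zero_zero, sub_zero, zero_sub, zero_add,
    add_zero, neg_zero]
  have hθU : θF Fl U = fun q => fderiv ℝ Fl q ((0 : A), U.1 q) := rfl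
  have hθW : θF Fl ((0 : (A × B) → B), w) = fun _ => (0 : ℝ) := by
    funext q
    simp [θF, Prod.mk_zero_zero]
  rw [hθU, hθW, hexp, fderiv_pair_zero hU1]
  simp [fderiv_const_apply]

end CH3
section CH4
variable {A B : Type*} [NormedAddCommGroup A] [NormedSpace ℝ A]
  [NormedAddCommGroup B] [NormedSpace ℝ B]

private lemma fderiv_diag {Lb : A → B →L[ℝ] B →L[ℝ] B} {𝓑 : A × B → B →L[ℝ] B} {p : A × B}
    (hd : DifferentiableAt ℝ 𝓑 p)
    (hT : ∀ u v : B, fderiv ℝ (fun q : A × B => 𝓑 q v) p ((0 : A), u)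
      - fderiv ℝ (fun q : A × B => 𝓑 q u) p ((0 : A), v) = Lb p.1 u v)
    (hH : ∀ u : B, fderiv ℝ (fun q : A × B => 𝓑 q u) p ((0 : A), p.2) = 𝓑 p u)
    (u : B) :
    fderiv ℝ (fun q : A × B => 𝓑 q q.2) p ((0 : A), u)
      = Lb p.1 u p.2 + 𝓑 p u + 𝓑 p u := by
  have h := fderiv_clm_apply' (c := 𝓑) (m := fun q : A × B => q.2) hd
    differentiableAt_snd ((0 : A), u)
  rw [h, fderiv_snd_comp]
  have h2 : (fderiv ℝ 𝓑 p ((0 : A), u)) p.2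
      = fderiv ℝ (fun q : A × B => 𝓑 q p.2) p ((0 : A), u) :=
    (fderiv_apply_const hd p.2 ((0 : A), u)).symm
  have h3 := hT u p.2
  rw [hH u, sub_eq_iff_eq_add] at h3
  rw [h2, h3]
  abel

private lemma barthel_unique {ρ : A → B →L[ℝ] A} {Lb : A → B →L[ℝ] B →L[ℝ] B}
    {Fl : A × B → ℝ} {𝓑₀ : A × B → B →L[ℝ] B} {Γ : A → B →L[ℝ] B →L[ℝ] B}
    (hρ : ContDiff ℝ (⊤ : ℕ∞) ρ)
    (hF : IsFinslerData ρ Lb Fl)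
    (h₀s : ContDiffOn ℝ (⊤ : ℕ∞) 𝓑₀ (Slit (A := A) (B := B)))
    (h₀hom : HomogeneousH ρ Lb 𝓑₀)
    (h₀cons : Conservative ρ Fl 𝓑₀)
    (h₀tf : TorsionFreeH ρ Lb 𝓑₀)
    (hΓ : ContDiff ℝ (⊤ : ℕ∞) Γ)
    (hΓt : ∀ x u v, Γ x u v - Γ x v u = Lb x u v)
    (hΓc : Conservative ρ Fl (horOf Γ)) :
    ∀ p : A × B, p.2 ≠ 0 → ∀ u : B, 𝓑₀ p u = horOf Γ p u := by
  obtain ⟨hFs, -, -, hnd⟩ := hF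
  have hflip : ContDiff ℝ (⊤ : ℕ∞) (ContinuousLinearMap.flip :
      (B →L[ℝ] B →L[ℝ] B) → (B →L[ℝ] B →L[ℝ] B)) := by
    have := (ContinuousLinearMap.flipₗᵢ ℝ B B B).contDiff (n := ((⊤ : ℕ∞) : WithTop ℕ∞))
    rwa [ContinuousLinearMap.coe_flipₗᵢ] at this
  have hhorΓ : ContDiff ℝ (⊤ : ℕ∞) (horOf Γ) := by
    have h1 : ContDiff ℝ (⊤ : ℕ∞) (fun p : A × B => (Γ p.1).flip) :=
      hflip.comp (hΓ.comp contDiff_fst)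
    exact (h1.clm_apply contDiff_snd).neg
  have h𝓑d : ∀ p : A × B, p.2 ≠ 0 → DifferentiableAt ℝ 𝓑₀ p :=
    fun p hp => diffAt_of_contDiffOn h₀s hp
  have h𝓑z : ∀ (p : A × B), p.2 ≠ 0 → ∀ z : B,
      DifferentiableAt ℝ (fun q : A × B => 𝓑₀ q z) p :=
    fun p hp z => (h𝓑d p hp).clm_apply (differentiableAt_const z)
  have hGd : ∀ p : A × B, DifferentiableAt ℝ (horOf Γ) p :=
    fun p => ((hhorΓ.differentiable (lt_of_lt_of_le zero_lt_one one_le_inf).ne').differentiableAt)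
  have hGz : ∀ (p : A × B) (z : B), DifferentiableAt ℝ (fun q : A × B => horOf Γ q z) p :=
    fun p z => (hGd p).clm_apply (differentiableAt_const z)
  have hT0 : ∀ (p : A × B), p.2 ≠ 0 → ∀ u v : B,
      fderiv ℝ (fun q : A × B => 𝓑₀ q v) p ((0 : A), u)
        - fderiv ℝ (fun q : A × B => 𝓑₀ q u) p ((0 : A), v) = Lb p.1 u v :=
    fun p hp u v => barthel_T h₀tf hp u v
  have hH0 : ∀ (p : A × B), p.2 ≠ 0 → ∀ u : B,
      fderiv ℝ (fun q : A × B => 𝓑₀ q u) p ((0 : A), p.2) = 𝓑₀ p u :=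
    fun p hp u => barthel_H h₀hom hp u
  have hTΓ : ∀ (p : A × B) (u v : B),
      fderiv ℝ (fun q : A × B => horOf Γ q v) p ((0 : A), u)
        - fderiv ℝ (fun q : A × B => horOf Γ q u) p ((0 : A), v) = Lb p.1 u v := by
    intro p u v
    rw [fderiv_horOf hΓ p v u, fderiv_horOf hΓ p u v, neg_sub_neg]
    exact hΓt p.1 u v
  have hHΓ : ∀ (p : A × B) (u : B),
      fderiv ℝ (fun q : A × B => horOf Γ q u) p ((0 : A), p.2) = horOf Γ p u := by
    intro p u
    rw [fderiv_horOf hΓ p u p.2]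
    simp [horOf]
  have hg : ∀ (p : A × B), p.2 ≠ 0 → ∀ u : B,
      fderiv ℝ (fderiv ℝ Fl) p ((0 : A), u) ((0 : A), 𝓑₀ p p.2 - horOf Γ p p.2) = 0 := by
    intro p hp u
    have k0 := key_g hρ hFs hp (h𝓑z p hp) h₀cons (hT0 p hp) (hH0 p hp) u
    have kΓ := key_g hρ hFs hp (hGz p) hΓc (hTΓ p) (hHΓ p) u
    have hsplit : (((0 : A), 𝓑₀ p p.2 - horOf Γ p p.2) : A × B)
        = (ρ p.1 p.2, 𝓑₀ p p.2) - (ρ p.1 p.2, horOf Γ p p.2) := by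
      apply Prod.ext <;> simp
    rw [hsplit, map_sub, k0, kΓ]
    ring
  have hwsm : ContDiffOn ℝ (⊤ : ℕ∞) (fun q : A × B => 𝓑₀ q q.2 - horOf Γ q q.2)
      (Slit (A := A) (B := B)) :=
    (h₀s.clm_apply contDiff_snd.contDiffOn).sub
      ((hhorΓ.clm_apply contDiff_snd).contDiffOn)
  have hW : SecSmoothOn (((0 : (A × B) → B),
      fun q : A × B => 𝓑₀ q q.2 - horOf Γ q q.2) : Sec A B) :=
    ⟨contDiffOn_const, hwsm⟩
  have hzero : ∀ (p : A × B), p.2 ≠ 0 → 𝓑₀ p p.2 - horOf Γ p p.2 = 0 := by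
    intro p hp
    refine (hnd _ hW ?_ p hp).2
    intro U hU q hq
    rw [omega_vert hFs hq (diffAt_of_contDiffOn hwsm hq) U hU]
    have hsym := (hFs.contDiffAt (slit_open.mem_nhds hq)).isSymmSndFDerivAt
      (by rw [minSmoothness_of_isRCLikeNormedField]; exact two_le_inf)
    exact (hsym _ _).trans (hg q hq (U.1 q))
  intro p hp u
  have hev : (fun q : A × B => 𝓑₀ q q.2) =ᶠ[nhds p] (fun q : A × B => horOf Γ q q.2) :=
    Filter.eventuallyEq_of_mem (slit_open.mem_nhds hp) (fun q hq => by
      have h := hzero q hq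
      rwa [sub_eq_zero] at h)
  have heq : fderiv ℝ (fun q : A × B => 𝓑₀ q q.2) p ((0 : A), u)
      = fderiv ℝ (fun q : A × B => horOf Γ q q.2) p ((0 : A), u) := by
    rw [hev.fderiv_eq]
  rw [fderiv_diag (h𝓑d p hp) (hT0 p hp) (hH0 p hp) u,
    fderiv_diag (hGd p) (hTΓ p) (hHΓ p) u] at heq
  have h2 : 𝓑₀ p u + 𝓑₀ p u = horOf Γ p u + horOf Γ p u := by
    have := heq
    abel_nf at this ⊢
    exact add_left_cancel this
  have h3 : (2 : ℝ) • 𝓑₀ p u = (2 : ℝ) • horOf Γ p u := by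
    rw [two_smul, two_smul]
    exact h2
  exact smul_right_injective B two_ne_zero h3

end CH4
section CH5
variable {A B : Type*} [NormedAddCommGroup A] [NormedSpace ℝ A]
  [NormedAddCommGroup B] [NormedSpace ℝ B]

private lemma bracket_formula {ρ : A → B →L[ℝ] A} {Lb : A → B →L[ℝ] B →L[ℝ] B}
    {𝓑₀ : A × B → B →L[ℝ] B} {Γ : A → B →L[ℝ] B →L[ℝ] B} {X Y : A → B}
    (hΓ : ContDiff ℝ (⊤ : ℕ∞) Γ)
    (heqB : ∀ p : A × B, p.2 ≠ 0 → ∀ u : B, 𝓑₀ p u = horOf Γ p u)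
    (hX : ContDiff ℝ (⊤ : ℕ∞) X) (hY : ContDiff ℝ (⊤ : ℕ∞) Y) :
    OnSlit (vlift (covD ρ Γ X Y)) (pbr ρ Lb (hlift ρ Lb 𝓑₀ X) (vlift Y)) := by
  intro p hp
  have hXd : DifferentiableAt ℝ X p.1 := (hX.differentiable (lt_of_lt_of_le zero_lt_one one_le_inf).ne').differentiableAt
  have hYd : DifferentiableAt ℝ Y p.1 := (hY.differentiable (lt_of_lt_of_le zero_lt_one one_le_inf).ne').differentiableAt
  constructor
  · simp only [vlift, hlift, hor, clift, pbr, ρL, Pi.zero_apply, map_zero,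
      fderiv_zero_fun, ContinuousLinearMap.zero_apply, zero_sub, zero_add, add_zero,
      sub_zero]
    rw [fderiv_fst_comp hXd]
    simp
  · simp only [vlift, hlift, hor, clift, pbr, ρL, Pi.zero_apply, map_zero,
      fderiv_zero_fun, ContinuousLinearMap.zero_apply, zero_sub, zero_add, add_zero,
      sub_zero, covD]
    rw [fderiv_fst_comp hYd]
    have hev : (fun q : A × B => 𝓑₀ q (X q.1)) =ᶠ[nhds p]
        (fun q : A × B => -(Γ q.1 (X q.1) q.2)) :=
      Filter.eventuallyEq_of_mem (slit_open.mem_nhds hp) (fun q hq => by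
        rw [heqB q hq (X q.1)]
        simp [horOf])
    have hXc : DifferentiableAt ℝ (fun x : A => Γ x (X x)) p.1 :=
      (((hΓ.clm_apply hX).differentiable (lt_of_lt_of_le zero_lt_one one_le_inf).ne').differentiableAt)
    have hcd : DifferentiableAt ℝ (fun q : A × B => Γ q.1 (X q.1)) p :=
      hXc.comp p differentiableAt_fst
    have hder : fderiv ℝ (fun q : A × B => 𝓑₀ q (X q.1)) p ((0 : A), Y p.1)
        = -(Γ p.1 (X p.1) (Y p.1)) := by
      rw [hev.fderiv_eq, fderiv_fun_neg]
      simp only [ContinuousLinearMap.neg_apply]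
      rw [fderiv_clm_apply' (c := fun q : A × B => Γ q.1 (X q.1))
        (m := fun q : A × B => q.2) hcd differentiableAt_snd ((0 : A), Y p.1),
        fderiv_snd_comp, fderiv_fst_comp hXc]
      simp
    rw [hder]
    abel

private lemma gamma_eq {ρ : A → B →L[ℝ] A} {Lb : A → B →L[ℝ] B →L[ℝ] B}
    {𝓑₀ : A × B → B →L[ℝ] B} {Γ : A → B →L[ℝ] B →L[ℝ] B}
    (hbr : ∀ X Y : A → B, ContDiff ℝ (⊤ : ℕ∞) X → ContDiff ℝ (⊤ : ℕ∞) Y →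
      OnSlit (vlift (covD ρ Γ X Y)) (pbr ρ Lb (hlift ρ Lb 𝓑₀ X) (vlift Y)))
    {p : A × B} (hp : p.2 ≠ 0) (u v : B) :
    Γ p.1 u v = - fderiv ℝ (fun q : A × B => 𝓑₀ q u) p ((0 : A), v) := by
  have h := (hbr (fun _ => u) (fun _ => v) contDiff_const contDiff_const p hp).2
  simp only [vlift, covD, hlift, hor, clift, pbr, ρL, fderiv_const_apply,
    ContinuousLinearMap.zero_apply, zero_add, zero_sub, Pi.zero_apply, map_zero] at h
  exact h

end CH5

/-- A Finsler algebroid `(E, F)` is a Berwald Lie algebroid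
(i.e. there is a torsion-free linear connection `∇` on `E` whose generated
horizontal endomorphism `h_∇` is conservative) if and only if there is a linear
connection `∇` on `E` with `(∇_X Y)^V = [X^{h₀}, Y^V]_L` for all sections
`X, Y`, where `h₀` is the Barthel endomorphism (the unique homogeneous,
conservative, torsion-free horizontal endomorphism). -/
theorem berwald_iff_barthel_connection
    (ρ : A → B →L[ℝ] A) (Lb : A → B →L[ℝ] B →L[ℝ] B)
    (halg : IsLieAlgebroidData ρ Lb)
    (Fl : A × B → ℝ) (hF : IsFinslerData ρ Lb Fl)
    -- the Barthel endomorphism of `(E, F)`: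
    (𝓑₀ : A × B → B →L[ℝ] B)
    (h₀s : ContDiffOn ℝ (⊤ : ℕ∞) 𝓑₀ (Slit (A := A) (B := B)))
    (h₀hom : HomogeneousH ρ Lb 𝓑₀)
    (h₀cons : Conservative ρ Fl 𝓑₀)
    (h₀tf : TorsionFreeH ρ Lb 𝓑₀) :
    (∃ Γ : A → B →L[ℝ] B →L[ℝ] B, ContDiff ℝ (⊤ : ℕ∞) Γ ∧
      (∀ x u v, Γ x u v - Γ x v u = Lb x u v) ∧
      Conservative ρ Fl (horOf Γ)) ↔
    (∃ Γ : A → B →L[ℝ] B →L[ℝ] B, ContDiff ℝ (⊤ : ℕ∞) Γ ∧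
      ∀ X Y : A → B, ContDiff ℝ (⊤ : ℕ∞) X → ContDiff ℝ (⊤ : ℕ∞) Y →
        OnSlit (vlift (covD ρ Γ X Y)) (pbr ρ Lb (hlift ρ Lb 𝓑₀ X) (vlift Y))) := by
  obtain ⟨hρ, -, -, -, -⟩ := halg
  constructor
  · rintro ⟨Γ, hΓ, hΓt, hΓc⟩
    exact ⟨Γ, hΓ, fun X Y hX hY => bracket_formula hΓ
      (barthel_unique hρ hF h₀s h₀hom h₀cons h₀tf hΓ hΓt hΓc) hX hY⟩
  · rintro ⟨Γ, hΓ, hbr⟩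
    refine ⟨Γ, hΓ, ?_, ?_⟩
    · intro x u v
      by_cases hB : ∃ y : B, y ≠ 0
      · obtain ⟨y, hy⟩ := hB
        have hp : ((x, y) : A × B).2 ≠ 0 := hy
        have h1 := gamma_eq hbr hp u v
        have h2 := gamma_eq hbr hp v u
        have hT := barthel_T h₀tf hp u v
        rw [h1, h2, neg_sub_neg]
        exact hT
      · push_neg at hB
        rw [hB u, hB v]
        simp
    · intro p hp z
      have hΓv := gamma_eq hbr hp z p.2
      have hH := barthel_H h₀hom hp z
      have hz : horOf Γ p z = 𝓑₀ p z := by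
        simp only [horOf, ContinuousLinearMap.neg_apply, ContinuousLinearMap.flip_apply]
        rw [hΓv, hH]
        simp
      rw [hz]
      exact h₀cons p hp z
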